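/- Let p be a prime and r ≤ s non-negative integers. Then the ratio (number of ideals of ℤ_{p^r} × ℤ_{p^s}) / (number of additive subgroups of ℤ_{p^r} × ℤ_{p^s}), as a rational number, equals (r+1)(s+1)(p−1)² / ( p^{r+1}·[(s − r + 1)(p − 1) + 2] − [(s + r + 3)(p − 1) + 2] ). -/

import Mathlib

open AddSubgroup
variable {p : ℕ}

open AddSubgroup

lemma zmultiples_neg' {G : Type*} [AddGroup G] (x : G) :
    zmultiples (-x) = zmultiples x := by
  ext y
  simp only [mem_zmultiples_iff]
  constructor
  · rintro ⟨k, rfl⟩; exact ⟨-k, by simp⟩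
  · rintro ⟨k, rfl⟩; exact ⟨-k, by simp⟩

lemma zmod_addSubgroup_classify {p : ℕ} (hp : p.Prime) (m : ℕ) (H : AddSubgroup (ZMod (p^m))) :
    ∃ i ≤ m, H = zmultiples ((p^i : ℕ) : ZMod (p^m)) := by
  have hq : (p^m : ℕ) ≠ 0 := pow_ne_zero _ hp.ne_zero
  haveI : NeZero (p^m) := ⟨hq⟩
  set f := Int.castAddHom (ZMod (p^m)) with hfdef
  have hf : Function.Surjective f := ZMod.intCast_surjective
  obtain ⟨d, hd⟩ := Int.subgroup_cyclic (H.comap f)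
  have hH : H = (H.comap f).map f := (AddSubgroup.map_comap_eq_self_of_surjective hf H).symm
  have hdvd : d ∣ ((p^m : ℕ) : ℤ) := by
    have hmem : (((p^m : ℕ) : ℤ)) ∈ H.comap f := by
      have hf0 : f (((p^m : ℕ) : ℤ)) = 0 := by
        simp only [hfdef, Int.coe_castAddHom, Int.cast_natCast, ZMod.natCast_self]
      rw [AddSubgroup.mem_comap, hf0]; exact H.zero_mem
    rw [hd, ← AddSubgroup.zmultiples_eq_closure, AddSubgroup.mem_zmultiples_iff] at hmem
    obtain ⟨k, hk⟩ := hmem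
    exact ⟨k, by rw [← hk, smul_eq_mul, mul_comm]⟩
  have h1 : d.natAbs ∣ p ^ m := by
    have h2 := Int.natAbs_dvd_natAbs.2 hdvd
    rwa [Int.natAbs_natCast] at h2
  obtain ⟨i, him, hi⟩ := (Nat.dvd_prime_pow hp).1 h1
  refine ⟨i, him, ?_⟩
  rw [hH, hd, ← AddSubgroup.zmultiples_eq_closure]
  have hmap : (zmultiples d).map f = zmultiples (f d) := by
    ext y
    simp only [AddSubgroup.mem_map, mem_zmultiples_iff]
    constructor
    · rintro ⟨x, ⟨k, rfl⟩, rfl⟩; exact ⟨k, (map_zsmul f k d).symm⟩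
    · rintro ⟨k, rfl⟩; exact ⟨k • d, ⟨k, rfl⟩, map_zsmul f k d⟩
  rw [hmap]
  have : f d = (d : ZMod (p^m)) := rfl
  rcases Int.natAbs_eq d with h | h
  · rw [this, h, hi]; norm_cast
  · rw [this, h, hi]; push_cast
    rw [zmultiples_neg']

lemma card_zmultiples_pow {p : ℕ} (hp : p.Prime) {m i : ℕ} (him : i ≤ m) :
    Nat.card (zmultiples ((p^i : ℕ) : ZMod (p^m))) = p^(m - i) := by
  have hq : (p^m : ℕ) ≠ 0 := pow_ne_zero _ hp.ne_zero
  rw [Nat.card_zmultiples, ZMod.addOrderOf_coe _ hq,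
    Nat.gcd_eq_right (pow_dvd_pow p him), Nat.pow_div him hp.pos]

lemma zmultiples_pow_inj {p : ℕ} (hp : p.Prime) {m i i' : ℕ} (him : i ≤ m) (him' : i' ≤ m)
    (h : zmultiples ((p^i : ℕ) : ZMod (p^m)) = zmultiples ((p^i' : ℕ) : ZMod (p^m))) :
    i = i' := by
  have := card_zmultiples_pow hp him
  rw [h, card_zmultiples_pow hp him'] at this
  have := Nat.pow_right_injective hp.two_le this
  omega



/-- The canonical subgroup of `ZMod (p^m) × ZMod (p^n)` with parameters `i j c`. -/
def Phi (p m n i j c : ℕ) : AddSubgroup (ZMod (p^m) × ZMod (p^n)) :=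
  AddSubgroup.closure {(((p^i : ℕ) : ZMod (p^m)), ((c : ℕ) : ZMod (p^n))),
    ((0 : ZMod (p^m)), ((p^j : ℕ) : ZMod (p^n)))}

lemma mem_Phi {m n i j c : ℕ} {z : ZMod (p^m) × ZMod (p^n)} :
    z ∈ Phi p m n i j c ↔ ∃ a b : ℤ,
      z.1 = ((a * p^i : ℤ) : ZMod (p^m)) ∧ z.2 = ((a * c + b * p^j : ℤ) : ZMod (p^n)) := by
  rw [Phi, AddSubgroup.mem_closure_pair]
  constructor
  · rintro ⟨a, b, h⟩
    refine ⟨a, b, ?_, ?_⟩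
    · rw [← h]; push_cast; simp [zsmul_eq_mul]
    · rw [← h]; push_cast; simp [zsmul_eq_mul]
  · rintro ⟨a, b, h1, h2⟩
    refine ⟨a, b, ?_⟩
    have : z = (z.1, z.2) := rfl
    rw [this, h1, h2]
    push_cast
    simp [zsmul_eq_mul, Prod.ext_iff]

lemma cast_mem_zmultiples_pow_iff (hp : p.Prime) {n j : ℕ} (hj : j ≤ n) (x : ℤ) :
    ((x : ZMod (p^n)) ∈ zmultiples ((p^j : ℕ) : ZMod (p^n))) ↔ ((p : ℤ)^j ∣ x) := by
  constructor
  · intro hmem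
    rw [mem_zmultiples_iff] at hmem
    obtain ⟨k, hk⟩ := hmem
    have h0 : ((x - k * p^j : ℤ) : ZMod (p^n)) = 0 := by
      push_cast
      rw [← hk]
      push_cast [zsmul_eq_mul]
      ring
    rw [ZMod.intCast_zmod_eq_zero_iff_dvd] at h0
    have hdj : ((p : ℤ))^j ∣ ((p^n : ℕ) : ℤ) := by
      push_cast
      exact pow_dvd_pow _ hj
    have h1 : ((p : ℤ))^j ∣ x - k * p^j := hdj.trans h0
    have h2 : ((p : ℤ))^j ∣ k * p^j := dvd_mul_left _ _
    simpa using dvd_add h1 h2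
  · rintro ⟨e, rfl⟩
    rw [mem_zmultiples_iff]
    exact ⟨e, by push_cast [zsmul_eq_mul]; ring⟩

lemma cast_eq_zero_iff_pow_dvd (hp : p.Prime) {m i : ℕ} (him : i ≤ m) (a : ℤ) :
    (((a * p^i : ℤ) : ZMod (p^m)) = 0) ↔ ((p : ℤ)^(m-i) ∣ a) := by
  rw [ZMod.intCast_zmod_eq_zero_iff_dvd]
  push_cast
  rw [show (p:ℤ)^m = (p:ℤ)^(m-i) * (p:ℤ)^i by rw [← pow_add]; congr 1; omega]
  constructor
  · intro h
    have hp0 : (0:ℤ) < p := by exact_mod_cast hp.pos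
    have hpow : ((p:ℤ)^i) ≠ 0 := by positivity
    exact (mul_dvd_mul_iff_right hpow).1 h
  · intro h
    exact mul_dvd_mul h dvd_rfl

lemma map_fst_Phi (m n i j c : ℕ) :
    (Phi p m n i j c).map (AddMonoidHom.fst _ _) = zmultiples ((p^i : ℕ) : ZMod (p^m)) := by
  ext x
  simp only [AddSubgroup.mem_map, AddMonoidHom.coe_fst]
  constructor
  · rintro ⟨⟨x', y⟩, hz, rfl⟩
    obtain ⟨a, b, h1, h2⟩ := mem_Phi.1 hz
    rw [mem_zmultiples_iff]
    exact ⟨a, by rw [h1]; push_cast [zsmul_eq_mul]; ring⟩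
  · intro hx
    rw [mem_zmultiples_iff] at hx
    obtain ⟨k, rfl⟩ := hx
    refine ⟨(k • ((p^i : ℕ) : ZMod (p^m)), ((k * c : ℤ) : ZMod (p^n))), ?_, rfl⟩
    rw [mem_Phi]
    refine ⟨k, 0, ?_, ?_⟩
    · simp only []
      push_cast [zsmul_eq_mul]
      ring
    · simp only []
      push_cast
      ring

lemma inr_mem_Phi_iff (hp : p.Prime) {m n i j c : ℕ} (him : i ≤ m) (hjn : j ≤ n)
    (hcd : p^j ∣ p^(m-i) * c) (y : ZMod (p^n)) :
    ((0, y) ∈ Phi p m n i j c) ↔ y ∈ zmultiples ((p^j : ℕ) : ZMod (p^n)) := by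
  constructor
  · intro hy
    obtain ⟨a, b, h1, h2⟩ := mem_Phi.1 hy
    simp only [] at h1 h2
    have ha : (p : ℤ)^(m-i) ∣ a := (cast_eq_zero_iff_pow_dvd hp him a).1 h1.symm
    obtain ⟨e, rfl⟩ := ha
    have : (p:ℤ)^j ∣ ((p:ℤ)^(m-i) * e * c + b * p^j) := by
      refine dvd_add ?_ (dvd_mul_left _ _)
      have : (p:ℤ)^j ∣ (p:ℤ)^(m-i) * c := by exact_mod_cast Int.natCast_dvd_natCast.2 hcd
      calc (p:ℤ)^j ∣ (p:ℤ)^(m-i) * c := this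
        _ ∣ (p:ℤ)^(m-i) * e * c := ⟨e, by ring⟩
    rw [h2]
    exact (cast_mem_zmultiples_pow_iff hp hjn _).2 this
  · intro hy
    rw [mem_zmultiples_iff] at hy
    obtain ⟨k, rfl⟩ := hy
    rw [mem_Phi]
    refine ⟨0, k, ?_, ?_⟩
    · simp only []
      push_cast
      ring
    · simp only []
      push_cast [zsmul_eq_mul]
      ring

lemma snd_recover_Phi (hp : p.Prime) {m n i j c : ℕ} (him : i ≤ m) (hjn : j ≤ n)
    (hcd : p^j ∣ p^(m-i) * c) {y : ZMod (p^n)}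
    (hy : (((p^i : ℕ) : ZMod (p^m)), y) ∈ Phi p m n i j c) :
    y - ((c : ℕ) : ZMod (p^n)) ∈ zmultiples ((p^j : ℕ) : ZMod (p^n)) := by
  obtain ⟨a, b, h1, h2⟩ := mem_Phi.1 hy
  simp only [] at h1 h2
  have h1' : ((((a - 1) * p^i : ℤ)) : ZMod (p^m)) = 0 := by
    push_cast
    rw [sub_mul]
    push_cast at h1
    rw [← h1]
    ring_nf
  have ha : (p : ℤ)^(m-i) ∣ a - 1 := (cast_eq_zero_iff_pow_dvd hp him _).1 h1'
  obtain ⟨e, he⟩ := ha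
  have hsub : y - ((c : ℕ) : ZMod (p^n)) = (((a-1) * c + b * p^j : ℤ) : ZMod (p^n)) := by
    rw [h2]; push_cast; ring
  rw [hsub]
  refine (cast_mem_zmultiples_pow_iff hp hjn _).2 ?_
  refine dvd_add ?_ (dvd_mul_left _ _)
  rw [he]
  have : (p:ℤ)^j ∣ (p:ℤ)^(m-i) * c := by exact_mod_cast Int.natCast_dvd_natCast.2 hcd
  calc (p:ℤ)^j ∣ (p:ℤ)^(m-i) * c := this
    _ ∣ (p:ℤ)^(m-i) * e * c := ⟨e, by ring⟩

section Bij

/-- canonical `c` value -/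
def cOf (p m i j t : ℕ) : ℕ := t * p^(j - min j (m - i))

lemma cOf_dvd_cond (hp : p.Prime) (m i j t : ℕ) :
    p^j ∣ p^(m-i) * cOf p m i j t := by
  set d := min j (m - i) with hd
  have hdj : d ≤ j := min_le_left _ _
  have hdm : d ≤ m - i := min_le_right _ _
  calc p^j ∣ p^(m-i) * p^(j-d) := by
        rw [← pow_add]; exact pow_dvd_pow p (by omega)
    _ ∣ p^(m-i) * cOf p m i j t := by
        rw [cOf]
        exact mul_dvd_mul_left _ (dvd_mul_left _ _)

lemma cOf_lt (hp : p.Prime) {m i j t : ℕ} (ht : t < p ^ min j (m - i)) :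
    cOf p m i j t < p^j := by
  set d := min j (m - i) with hd
  have hdj : d ≤ j := min_le_left _ _
  have : cOf p m i j t < p^d * p^(j-d) :=
    Nat.mul_lt_mul_of_lt_of_le ht le_rfl (pow_pos hp.pos _)
  calc cOf p m i j t < p^d * p^(j-d) := this
    _ = p^j := by rw [← pow_add]; congr 1; omega

lemma Phi_inj (hp : p.Prime) {m n i j t i' j' t' : ℕ}
    (him : i ≤ m) (hjn : j ≤ n) (ht : t < p ^ min j (m - i))
    (him' : i' ≤ m) (hjn' : j' ≤ n) (ht' : t' < p ^ min j' (m - i'))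
    (heq : Phi p m n i j (cOf p m i j t) = Phi p m n i' j' (cOf p m i' j' t')) :
    i = i' ∧ j = j' ∧ t = t' := by
  have hq : (p^n : ℕ) ≠ 0 := pow_ne_zero _ hp.ne_zero
  -- i = i'
  have hii : i = i' := by
    have h1 := map_fst_Phi (p := p) m n i j (cOf p m i j t)
    have h2 := map_fst_Phi (p := p) m n i' j' (cOf p m i' j' t')
    rw [heq, h2] at h1
    exact zmultiples_pow_inj hp him him' h1.symm
  subst hii
  -- j = j'
  have hjj : j = j' := by
    have h1 := fun y => inr_mem_Phi_iff hp him hjn (cOf_dvd_cond hp m i j t) y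
    have h2 := fun y => inr_mem_Phi_iff hp him hjn' (cOf_dvd_cond hp m i j' t') y
    have : zmultiples ((p^j : ℕ) : ZMod (p^n)) = zmultiples ((p^j' : ℕ) : ZMod (p^n)) := by
      ext y
      rw [← h1 y, ← h2 y, heq]
    exact zmultiples_pow_inj hp hjn hjn' this
  subst hjj
  -- t = t'
  refine ⟨rfl, rfl, ?_⟩
  have hmem : ((((p^i:ℕ)) : ZMod (p^m)), ((cOf p m i j t : ℕ) : ZMod (p^n))) ∈
      Phi p m n i j (cOf p m i j t') := by
    rw [← heq, mem_Phi]
    exact ⟨1, 0, by push_cast; ring, by push_cast; ring⟩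
  have hrec := snd_recover_Phi hp him hjn (cOf_dvd_cond hp m i j t') hmem
  have hdvd : (p:ℤ)^j ∣ ((cOf p m i j t : ℤ) - (cOf p m i j t' : ℤ)) := by
    have : (((cOf p m i j t : ℕ) : ZMod (p^n)) - ((cOf p m i j t' : ℕ) : ZMod (p^n))) =
        (((cOf p m i j t : ℤ) - (cOf p m i j t' : ℤ) : ℤ) : ZMod (p^n)) := by push_cast; ring
    rw [this] at hrec
    exact (cast_mem_zmultiples_pow_iff hp hjn _).1 hrec
  have hlt := cOf_lt hp (m := m) (i := i) (j := j) ht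
  have hlt' := cOf_lt hp (m := m) (i := i) (j := j) ht'
  have hcc : cOf p m i j t = cOf p m i j t' := by
    obtain ⟨e, he⟩ := hdvd
    have hp0 : (0:ℤ) < (p:ℤ) := by exact_mod_cast hp.pos
    have hpj : (0:ℤ) < (p:ℤ)^j := by positivity
    have h1 : ((cOf p m i j t : ℤ)) < (p:ℤ)^j := by exact_mod_cast hlt
    have h2 : ((cOf p m i j t' : ℤ)) < (p:ℤ)^j := by exact_mod_cast hlt'
    have h3 : (0:ℤ) ≤ (cOf p m i j t : ℤ) := by positivity
    have h4 : (0:ℤ) ≤ (cOf p m i j t' : ℤ) := by positivity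
    have he0 : e = 0 := by nlinarith [hpj]
    rw [he0, mul_zero] at he
    exact_mod_cast sub_eq_zero.1 he
  rw [cOf, cOf] at hcc
  exact Nat.eq_of_mul_eq_mul_right (pow_pos hp.pos _) hcc

end Bij

lemma Phi_surj (hp : p.Prime) (m n : ℕ) (H : AddSubgroup (ZMod (p^m) × ZMod (p^n))) :
    ∃ i, i ≤ m ∧ ∃ j, j ≤ n ∧ ∃ t, t < p ^ min j (m - i) ∧
      H = Phi p m n i j (cOf p m i j t) := by
  haveI : NeZero (p^n) := ⟨pow_ne_zero _ hp.ne_zero⟩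
  haveI : NeZero (p^m) := ⟨pow_ne_zero _ hp.ne_zero⟩
  obtain ⟨i, him, hi⟩ := zmod_addSubgroup_classify hp m (H.map (AddMonoidHom.fst _ _))
  obtain ⟨j, hjn, hj⟩ := zmod_addSubgroup_classify hp n
    (H.comap (AddMonoidHom.inr (ZMod (p^m)) (ZMod (p^n))))
  have hK : ∀ y : ZMod (p^n), ((0, y) ∈ H ↔ y ∈ zmultiples ((p^j : ℕ) : ZMod (p^n))) := by
    intro y
    rw [← hj, AddSubgroup.mem_comap]
    rfl
  have hFst : ∀ x : ZMod (p^m),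
      ((∃ y, (x, y) ∈ H) ↔ x ∈ zmultiples ((p^i : ℕ) : ZMod (p^m))) := by
    intro x
    rw [← hi]
    constructor
    · rintro ⟨y, hy⟩; exact ⟨(x, y), hy, rfl⟩
    · rintro ⟨⟨x', y⟩, hz, rfl⟩; exact ⟨y, hz⟩
  -- pick z ∈ H with first coordinate p^i
  have hpiH : ∃ y, ((((p^i : ℕ)) : ZMod (p^m)), y) ∈ H := by
    rw [hFst]
    exact mem_zmultiples _
  obtain ⟨y0, hy0⟩ := hpiH
  set u := y0.val with hu_def
  have hu : ((u : ℕ) : ZMod (p^n)) = y0 := ZMod.natCast_rightInverse y0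
  -- p^(m-i) * u is in the kernel part
  have hker : ((p^(m-i) * u : ℕ) : ZMod (p^n)) ∈ zmultiples ((p^j : ℕ) : ZMod (p^n)) := by
    rw [← hK]
    have : (((0 : ZMod (p^m))), ((p^(m-i) * u : ℕ) : ZMod (p^n))) = (p^(m-i) : ℕ) • (((p^i : ℕ) : ZMod (p^m)), y0) := by
      rw [Prod.smul_mk, Prod.mk.injEq]
      constructor
      · rw [nsmul_eq_mul, ← Nat.cast_mul, ← pow_add, show m - i + i = m by omega,
          ZMod.natCast_self]
      · rw [nsmul_eq_mul, ← hu]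
        push_cast
        ring
    rw [this]
    exact nsmul_mem hy0 _
  have hdvdj : p^j ∣ p^(m-i) * u := by
    have h1 : (p:ℤ)^j ∣ ((p^(m-i) * u : ℕ) : ℤ) := by
      apply (cast_mem_zmultiples_pow_iff hp hjn _).1
      rwa [Int.cast_natCast]
    have h2 : ((p^j : ℕ) : ℤ) ∣ ((p^(m-i) * u : ℕ) : ℤ) := by
      push_cast at h1 ⊢
      exact h1
    exact_mod_cast h2
  set d := min j (m - i) with hd_def
  have hdu : p^(j - d) ∣ u := by
    rcases le_or_gt j (m - i) with hcase | hcase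
    · have : d = j := min_eq_left hcase
      rw [this]
      simp
    · have hdm : d = m - i := min_eq_right (le_of_lt hcase)
      have hsplit : p^j = p^(m-i) * p^(j - d) := by
        rw [← pow_add]; congr 1; omega
      rw [hsplit] at hdvdj
      exact (Nat.mul_dvd_mul_iff_left (pow_pos hp.pos (m-i))).1 hdvdj
  obtain ⟨u', hu'⟩ := hdu
  set t := u' % p^d with ht_def
  have ht : t < p^d := Nat.mod_lt _ (pow_pos hp.pos d)
  set e := u' / p^d with he_def
  have hue : u = cOf p m i j t + e * p^j := by
    have h1 : u' = p^d * e + t := (Nat.div_add_mod u' (p^d)).symm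
    have h2 : p^(j-d) * p^d = p^j := by rw [← pow_add]; congr 1; omega
    rw [cOf, hu', h1, ← hd_def, ← h2]
    ring
  refine ⟨i, him, j, hjn, t, ht, ?_⟩
  -- membership facts
  have hpj_mem : ((0 : ZMod (p^m)), ((p^j : ℕ) : ZMod (p^n))) ∈ H := by
    rw [hK]
    exact mem_zmultiples _
  have hepj_mem : ((0 : ZMod (p^m)), ((e * p^j : ℕ) : ZMod (p^n))) ∈ H := by
    rw [hK, mem_zmultiples_iff]
    exact ⟨e, by push_cast [zsmul_eq_mul]; ring⟩
  have hgen_mem : ((((p^i : ℕ)) : ZMod (p^m)), ((cOf p m i j t : ℕ) : ZMod (p^n))) ∈ H := by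
    have heq2 : ((((p^i : ℕ)) : ZMod (p^m)), ((cOf p m i j t : ℕ) : ZMod (p^n))) =
        ((((p^i : ℕ)) : ZMod (p^m)), y0) - ((0 : ZMod (p^m)), ((e * p^j : ℕ) : ZMod (p^n))) := by
      rw [Prod.mk_sub_mk, Prod.mk.injEq]
      refine ⟨by simp, ?_⟩
      rw [← hu, hue]
      push_cast
      ring
    rw [heq2]
    exact sub_mem hy0 hepj_mem
  apply le_antisymm
  · -- H ≤ Phi
    rintro ⟨x, y⟩ hxy
    have hx : x ∈ zmultiples ((p^i : ℕ) : ZMod (p^m)) := by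
      rw [← hFst]
      exact ⟨y, hxy⟩
    rw [mem_zmultiples_iff] at hx
    obtain ⟨a, ha⟩ := hx
    have hsub : ((0 : ZMod (p^m)), y - a • ((cOf p m i j t : ℕ) : ZMod (p^n))) ∈ H := by
      have heq3 : ((0 : ZMod (p^m)), y - a • ((cOf p m i j t : ℕ) : ZMod (p^n))) =
          (x, y) - a • ((((p^i : ℕ)) : ZMod (p^m)), ((cOf p m i j t : ℕ) : ZMod (p^n))) := by
        rw [Prod.smul_mk, Prod.mk_sub_mk, Prod.mk.injEq]
        exact ⟨by rw [ha]; simp, rfl⟩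
      rw [heq3]
      exact sub_mem hxy (zsmul_mem hgen_mem a)
    rw [hK, mem_zmultiples_iff] at hsub
    obtain ⟨b, hb⟩ := hsub
    rw [mem_Phi]
    refine ⟨a, b, ?_, ?_⟩
    · simp only []
      rw [← ha]
      push_cast [zsmul_eq_mul]
      ring
    · simp only []
      have : y = a • ((cOf p m i j t : ℕ) : ZMod (p^n)) + b • ((p^j : ℕ) : ZMod (p^n)) := by
        rw [hb]
        ring
      rw [this]
      push_cast [zsmul_eq_mul]
      ring
  · -- Phi ≤ H
    rw [Phi]
    rw [AddSubgroup.closure_le]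
    rintro z (rfl | rfl)
    · exact hgen_mem
    · exact hpj_mem

theorem card_addSubgroup_zmod_prod (hp : p.Prime) (m n : ℕ) :
    Nat.card (AddSubgroup (ZMod (p^m) × ZMod (p^n))) =
      ∑ i ∈ Finset.range (m+1), ∑ j ∈ Finset.range (n+1), p ^ min j (m - i) := by
  have hbij : Function.Bijective
      (fun x : Σ i : Fin (m+1), Σ j : Fin (n+1), Fin (p ^ min (j:ℕ) (m - (i:ℕ))) =>
        Phi p m n x.1 x.2.1 (cOf p m (x.1:ℕ) (x.2.1:ℕ) (x.2.2:ℕ))) := by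
    constructor
    · rintro ⟨i, j, t⟩ ⟨i', j', t'⟩ h
      obtain ⟨h1, h2, h3⟩ := Phi_inj hp (Nat.lt_succ_iff.1 i.isLt) (Nat.lt_succ_iff.1 j.isLt)
        t.isLt (Nat.lt_succ_iff.1 i'.isLt) (Nat.lt_succ_iff.1 j'.isLt) t'.isLt h
      have hi : i = i' := Fin.ext h1
      subst hi
      have hj : j = j' := Fin.ext h2
      subst hj
      have ht2 : t = t' := Fin.ext h3
      subst ht2
      rfl
    · intro H
      obtain ⟨i, him, j, hjn, t, ht, hH⟩ := Phi_surj hp m n H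
      exact ⟨⟨⟨i, by omega⟩, ⟨j, by omega⟩, ⟨t, ht⟩⟩, hH.symm⟩
  rw [← Nat.card_eq_of_bijective _ hbij]
  rw [Nat.card_eq_fintype_card]
  have hinner : ∀ (k : ℕ), ∑ j : Fin (n+1), p ^ min (j:ℕ) (m - k) =
      ∑ j ∈ Finset.range (n+1), p ^ min j (m - k) := fun k =>
    Fin.sum_univ_eq_sum_range (fun j => p ^ min j (m - k)) (n+1)
  simp only [Fintype.card_sigma, Fintype.card_fin, hinner]
  exact Fin.sum_univ_eq_sum_range (fun i => ∑ j ∈ Finset.range (n+1), p ^ min j (m - i)) (m+1)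

/-- Ideals of `ZMod q` are the same as additive subgroups. -/
def idealEquivAddSubgroup (q : ℕ) [NeZero q] : Ideal (ZMod q) ≃ AddSubgroup (ZMod q) where
  toFun I := I.toAddSubgroup
  invFun H :=
    { carrier := H
      add_mem' := fun ha hb => H.add_mem ha hb
      zero_mem' := H.zero_mem
      smul_mem' := fun c x hx => by
        have h1 : c • x = (c.val : ℕ) • x := by
          rw [smul_eq_mul, nsmul_eq_mul, ZMod.natCast_rightInverse c]
        rw [h1]
        exact AddSubgroup.nsmul_mem H hx _ }
  left_inv I := by ext x; rfl
  right_inv H := by ext x; rfl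

lemma card_addSubgroup_zmod_pow (hp : p.Prime) (m : ℕ) :
    Nat.card (AddSubgroup (ZMod (p^m))) = m + 1 := by
  have hbij : Function.Bijective
      (fun i : Fin (m+1) => zmultiples (((p^(i:ℕ) : ℕ)) : ZMod (p^m))) := by
    constructor
    · intro i i' h
      exact Fin.ext (zmultiples_pow_inj hp (Nat.lt_succ_iff.1 i.isLt)
        (Nat.lt_succ_iff.1 i'.isLt) h)
    · intro H
      obtain ⟨i, him, hi⟩ := zmod_addSubgroup_classify hp m H
      exact ⟨⟨i, by omega⟩, hi.symm⟩
  rw [← Nat.card_eq_of_bijective _ hbij, Nat.card_eq_fintype_card, Fintype.card_fin]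

lemma card_ideal_zmod_pow (hp : p.Prime) (m : ℕ) :
    Nat.card (Ideal (ZMod (p^m))) = m + 1 := by
  haveI : NeZero (p^m) := ⟨pow_ne_zero _ hp.ne_zero⟩
  rw [Nat.card_congr (idealEquivAddSubgroup (p^m))]
  exact card_addSubgroup_zmod_pow hp m

lemma card_ideal_prod (hp : p.Prime) (m n : ℕ) :
    Nat.card (Ideal (ZMod (p^m) × ZMod (p^n))) = (m + 1) * (n + 1) := by
  rw [Nat.card_congr (Ideal.idealProdEquiv (R := ZMod (p^m)) (S := ZMod (p^n))).toEquiv,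
    Nat.card_prod, card_ideal_zmod_pow hp, card_ideal_zmod_pow hp]

lemma key_identity (hp : p.Prime) : ∀ {r s : ℕ}, r ≤ s →
    ((∑ k ∈ Finset.range (r+1), ∑ j ∈ Finset.range (s+1), p ^ min j k : ℕ) : ℚ) *
        ((p:ℚ) - 1)^2 =
      (p : ℚ) ^ (r + 1) * (((s : ℚ) - (r : ℚ) + 1) * ((p : ℚ) - 1) + 2) -
          (((s : ℚ) + (r : ℚ) + 3) * ((p : ℚ) - 1) + 2) := by
  intro r
  induction r with
  | zero =>
    intro s hs
    rw [Finset.sum_range_one]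
    simp only [Nat.min_zero, pow_zero, Finset.sum_const, Finset.card_range, smul_eq_mul, mul_one]
    push_cast
    ring
  | succ r ih =>
    intro s hs
    have hr : r ≤ s := by omega
    have ihr := ih hr
    set w := s - (r + 1) with hw_def
    have hsw : s = w + (r + 1) := by omega
    have hF : ∑ j ∈ Finset.range (s+1), p ^ min j (r+1) =
        (∑ j ∈ Finset.range (r+2), p^j) + w * p^(r+1) := by
      rw [Finset.range_eq_Ico,
        ← Finset.sum_Ico_consecutive _ (by omega : 0 ≤ r+2) (by omega : r+2 ≤ s+1)]
      congr 1
      · rw [← Finset.range_eq_Ico]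
        refine Finset.sum_congr rfl fun j hj => ?_
        rw [Finset.mem_range] at hj
        congr 1
        omega
      · rw [Finset.sum_congr rfl (fun j hj => ?_), Finset.sum_const, Nat.card_Ico,
          smul_eq_mul]
        · congr 1
          omega
        · rw [Finset.mem_Ico] at hj
          congr 1
          omega
    rw [Finset.sum_range_succ, hF]
    have hgeom := geom_sum_mul ((p:ℚ)) (r+2)
    have hsq : (s : ℚ) = (w : ℚ) + (r : ℚ) + 1 := by exact_mod_cast congrArg (Nat.cast : ℕ → ℚ) hsw
    rw [hsq] at ihr ⊢
    push_cast at ihr ⊢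
    linear_combination ihr + hgeom * ((p:ℚ) - 1)



/-- The probability that a random additive subgroup of `ℤ_{p^r} × ℤ_{p^s}` (`r ≤ s`)
is an ideal equals
`(r+1)(s+1)(p-1)² / (p^{r+1}[(s-r+1)(p-1)+2] - [(s+r+3)(p-1)+2])`. -/
theorem idealProb_zmod_prime_pow_prod (p : ℕ) (hp : p.Prime) (r s : ℕ) (hrs : r ≤ s) :
    (Nat.card (Ideal (ZMod (p ^ r) × ZMod (p ^ s))) : ℚ) /
        (Nat.card (AddSubgroup (ZMod (p ^ r) × ZMod (p ^ s))) : ℚ) =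
      (((r : ℚ) + 1) * ((s : ℚ) + 1) * ((p : ℚ) - 1) ^ 2) /
        ((p : ℚ) ^ (r + 1) * (((s : ℚ) - (r : ℚ) + 1) * ((p : ℚ) - 1) + 2) -
          (((s : ℚ) + (r : ℚ) + 3) * ((p : ℚ) - 1) + 2)) := by
  rw [card_ideal_prod hp r s, card_addSubgroup_zmod_prod hp r s]
  have hrefl : ∑ i ∈ Finset.range (r+1), ∑ j ∈ Finset.range (s+1), p ^ min j (r - i) =
      ∑ k ∈ Finset.range (r+1), ∑ j ∈ Finset.range (s+1), p ^ min j k := by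
    have h := Finset.sum_range_reflect
      (fun k => ∑ j ∈ Finset.range (s+1), p ^ min j k) (r+1)
    simpa using h
  rw [hrefl, ← key_identity hp hrs]
  have hp1 : (1:ℚ) < (p:ℚ) := by exact_mod_cast hp.one_lt
  have hne : ((p:ℚ) - 1)^2 ≠ 0 := pow_ne_zero _ (by linarith)
  rw [show (((r : ℚ) + 1) * ((s : ℚ) + 1) * ((p : ℚ) - 1) ^ 2) =
      (((r+1) * (s+1) : ℕ) : ℚ) * ((p:ℚ) - 1)^2 by push_cast; ring]
  rw [mul_div_mul_right _ _ hne]
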